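/- Assume the KKT setup with dataset size m, and additionally: m·(p+1) ≤ (d+1)/3, and there is c ∈ (0,1] with |I^+| ≥ c·m and |I^−| ≥ c·m. Then there exists η > 0 such that the vector z := η · Σ_{i=1}^m y_i x_i satisfies ‖z‖ ≤ 18·√(2d)/(c·√m), N_θ(x_i − z) ≤ −1 for every i ∈ I^+, and N_θ(x_i + z) ≥ 1 for every i ∈ I^−. -/

import Mathlib

open InnerProductSpace Finset

/-- A depth-2 ReLU network of width `k` with first-layer weights `w`, biases `b`
and second-layer weights `v`. -/
noncomputable def net {d k : ℕ} (w : Fin k → EuclideanSpace ℝ (Fin d))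
    (b v : Fin k → ℝ) (z : EuclideanSpace ℝ (Fin d)) : ℝ :=
  ∑ j, v j * max 0 (⟪w j, z⟫_ℝ + b j)

lemma relu_eq_mul (a t : ℝ) (h1 : 0 < a → t = 1) (h0 : a < 0 → t = 0) :
    max 0 a = t * a := by
  rcases lt_trichotomy a 0 with h|h|h
  · rw [h0 h, max_eq_left h.le, zero_mul]
  · simp [h]
  · rw [h1 h, max_eq_right h.le, one_mul]

lemma inner_zs_bound (d m : ℕ) (x : Fin m → EuclideanSpace ℝ (Fin d)) (y : Fin m → ℝ) (p : ℝ)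
    (hy : ∀ i, y i = 1 ∨ y i = -1)
    (hx : ∀ i, ‖x i‖ = Real.sqrt d)
    (hp0 : 0 ≤ p)
    (hp : ∀ i j, i ≠ j → |⟪x i, x j⟫_ℝ| ≤ p) :
    ∀ l, |y l * ⟪x l, ∑ r, y r • x r⟫_ℝ - (d : ℝ)| ≤ (m : ℝ) * p := by
  intro l
  have hy2 : ∀ i, y i * y i = 1 := by intro i; rcases hy i with h|h <;> rw [h] <;> norm_num
  have hyabs : ∀ i, |y i| = 1 := by intro i; rcases hy i with h|h <;> rw [h] <;> norm_num
  have hxx : ⟪x l, x l⟫_ℝ = (d : ℝ) := by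
    rw [real_inner_self_eq_norm_sq, hx l, Real.sq_sqrt (by positivity)]
  have hexp : y l * ⟪x l, ∑ r, y r • x r⟫_ℝ
      = (d : ℝ) + ∑ r ∈ univ.erase l, y l * (y r * ⟪x l, x r⟫_ℝ) := by
    rw [inner_sum]
    simp only [real_inner_smul_right]
    rw [Finset.mul_sum, ← Finset.add_sum_erase _ _ (mem_univ l), hxx]
    have := hy2 l
    nlinarith [hy2 l]
  rw [hexp, add_sub_cancel_left]
  calc |∑ r ∈ univ.erase l, y l * (y r * ⟪x l, x r⟫_ℝ)|
      ≤ ∑ r ∈ univ.erase l, |y l * (y r * ⟪x l, x r⟫_ℝ)| := Finset.abs_sum_le_sum_abs _ _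
    _ ≤ ∑ r ∈ univ.erase l, p := by
        apply Finset.sum_le_sum
        intro r hr
        have hrl : r ≠ l := (Finset.mem_erase.mp hr).1
        rw [abs_mul, abs_mul, hyabs, hyabs, one_mul, one_mul]
        exact hp l r (fun h => hrl h.symm)
    _ ≤ ∑ _r ∈ (univ : Finset (Fin m)), p :=
        Finset.sum_le_sum_of_subset_of_nonneg (Finset.erase_subset _ _) (fun _ _ _ => hp0)
    _ = (m : ℝ) * p := by rw [Finset.sum_const, Finset.card_univ, Fintype.card_fin, nsmul_eq_mul]


set_option maxHeartbeats 2000000 in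
lemma kkt_main_pos (d m k : ℕ)
    (x : Fin m → EuclideanSpace ℝ (Fin d)) (y : Fin m → ℝ)
    (w : Fin k → EuclideanSpace ℝ (Fin d)) (b v : Fin k → ℝ)
    (lam : Fin m → ℝ) (s : Fin m → Fin k → ℝ) (p : ℝ)
    (hy : ∀ i, y i = 1 ∨ y i = -1)
    (hx : ∀ i, ‖x i‖ = Real.sqrt d)
    (hp0 : 0 ≤ p)
    (hp : ∀ i j, i ≠ j → |⟪x i, x j⟫_ℝ| ≤ p)
    (hlam : ∀ i, 0 ≤ lam i)
    (hs01 : ∀ i j, s i j ∈ Set.Icc (0 : ℝ) 1)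
    (hmargin : ∀ i, 1 ≤ y i * net w b v (x i))
    (hcomp : ∀ i, y i * net w b v (x i) ≠ 1 → lam i = 0)
    (hs1 : ∀ i j, 0 < ⟪w j, x i⟫_ℝ + b j → s i j = 1)
    (hs0 : ∀ i j, ⟪w j, x i⟫_ℝ + b j < 0 → s i j = 0)
    (hw : ∀ j, w j = ∑ i, (lam i * y i * v j * s i j) • x i)
    (hb : ∀ j, b j = ∑ i, lam i * y i * v j * s i j)
    (hmp : (m : ℝ) * (p + 1) ≤ ((d : ℝ) + 1) / 3)
    (c : ℝ) (hc0 : 0 < c) (hc1 : c ≤ 1) (hm : 0 < m)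
    (hIm : c * m ≤ ((Finset.univ.filter fun i => y i = -1).card : ℝ)) :
    ∀ i, y i = 1 →
      net w b v (x i - (8 / (c * m) + 3 * (p + 1) / ((d:ℝ) + 1)) • ∑ l, y l • x l) ≤ -1 := by
  classical
  have hm1 : (1:ℝ) ≤ (m:ℝ) := by exact_mod_cast hm
  have hP1 : (1:ℝ) ≤ p + 1 := by linarith
  have hd3 : (3:ℝ) ≤ (d:ℝ) + 1 := by nlinarith
  have hd0 : (0:ℝ) < (d:ℝ) + 1 := by linarith
  have hcm : (0:ℝ) < c * m := by positivity
  set zs : EuclideanSpace ℝ (Fin d) := ∑ l, y l • x l with hzs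
  set η : ℝ := 8 / (c * m) + 3 * (p + 1) / ((d:ℝ) + 1) with hηdef
  set U : ℝ := 2 * ((d:ℝ) + 1) / 3 with hUdef
  have hU0 : 0 < U := by rw [hUdef]; positivity
  have hη0 : 0 < η := by rw [hηdef]; positivity
  have hy2 : ∀ i, y i * y i = 1 := by intro i; rcases hy i with h|h <;> rw [h] <;> norm_num
  have hyabs : ∀ i, |y i| = 1 := by intro i; rcases hy i with h|h <;> rw [h] <;> norm_num
  have hxx : ∀ l, ⟪x l, x l⟫_ℝ = (d : ℝ) := by
    intro l; rw [real_inner_self_eq_norm_sq, hx l, Real.sq_sqrt (by positivity)]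
  have hs0' : ∀ i j, 0 ≤ s i j := fun i j => (hs01 i j).1
  have hs1' : ∀ i j, s i j ≤ 1 := fun i j => (hs01 i j).2
  set A : Fin k → ℝ := fun j => ∑ l, lam l * s l j with hA
  have hA0 : ∀ j, 0 ≤ A j := by
    intro j; rw [hA]
    exact Finset.sum_nonneg fun l _ => mul_nonneg (hlam l) (hs0' l j)
  set Sx : Fin m → Fin k → ℝ :=
    fun i j => ∑ l, lam l * y l * s l j * (⟪x l, x i⟫_ℝ + 1) with hSx
  set T : Fin k → ℝ := fun j => ∑ l, lam l * s l j * (y l * ⟪x l, zs⟫_ℝ) with hT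
  set B : ℝ := ∑ j ∈ univ.filter (fun j => v j < 0), v j ^ 2 * A j with hBdef
  -- preactivation formula
  have hpre : ∀ i j, ⟪w j, x i⟫_ℝ + b j = v j * Sx i j := by
    intro i j
    rw [hw j, hb j, sum_inner]
    simp only [real_inner_smul_left]
    rw [← Finset.sum_add_distrib]
    simp only [hSx]
    rw [Finset.mul_sum]
    exact Finset.sum_congr rfl fun l _ => by ring
  -- diagonal split
  have hSxd : ∀ i j, Sx i j = lam i * y i * s i j * ((d:ℝ) + 1)
      + ∑ l ∈ univ.erase i, lam l * y l * s l j * (⟪x l, x i⟫_ℝ + 1) := by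
    intro i j
    simp only [hSx]
    rw [← Finset.add_sum_erase _ _ (mem_univ i), hxx i]
  -- off-diagonal bound
  have hRxb : ∀ i j, |∑ l ∈ univ.erase i, lam l * y l * s l j * (⟪x l, x i⟫_ℝ + 1)|
      ≤ (p + 1) * A j := by
    intro i j
    calc |∑ l ∈ univ.erase i, lam l * y l * s l j * (⟪x l, x i⟫_ℝ + 1)|
        ≤ ∑ l ∈ univ.erase i, |lam l * y l * s l j * (⟪x l, x i⟫_ℝ + 1)| :=
          Finset.abs_sum_le_sum_abs _ _
      _ ≤ ∑ l ∈ univ.erase i, lam l * s l j * (p + 1) := by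
          apply Finset.sum_le_sum
          intro l hl
          have hli : l ≠ i := (Finset.mem_erase.mp hl).1
          have hg : |⟪x l, x i⟫_ℝ + 1| ≤ p + 1 := by
            have h1 : |⟪x l, x i⟫_ℝ + 1| ≤ |⟪x l, x i⟫_ℝ| + |(1:ℝ)| := abs_add_le _ _
            have h2 := hp l i hli
            simp only [abs_one] at h1
            linarith
          have habs : |lam l * y l * s l j * (⟪x l, x i⟫_ℝ + 1)|
              = lam l * |y l| * s l j * |⟪x l, x i⟫_ℝ + 1| := by
            rw [abs_mul, abs_mul, abs_mul, abs_of_nonneg (hlam l), abs_of_nonneg (hs0' l j)]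
          rw [habs, hyabs l]
          have hls : 0 ≤ lam l * s l j := mul_nonneg (hlam l) (hs0' l j)
          nlinarith [mul_le_mul_of_nonneg_left hg hls]
      _ ≤ ∑ l, lam l * s l j * (p + 1) :=
          Finset.sum_le_sum_of_subset_of_nonneg (Finset.erase_subset _ _)
            (fun l _ _ => mul_nonneg (mul_nonneg (hlam l) (hs0' l j)) (by linarith))
      _ = (p + 1) * A j := by
          simp only [hA]
          rw [Finset.mul_sum]
          exact Finset.sum_congr rfl fun l _ => by ring
  have hSxabs : ∀ i j, |Sx i j| ≤ lam i * s i j * ((d:ℝ) + 1) + (p + 1) * A j := by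
    intro i j
    rw [hSxd i j]
    have h1 := abs_add_le (lam i * y i * s i j * ((d:ℝ) + 1))
      (∑ l ∈ univ.erase i, lam l * y l * s l j * (⟪x l, x i⟫_ℝ + 1))
    have h2 : |lam i * y i * s i j * ((d:ℝ) + 1)| = lam i * s i j * ((d:ℝ) + 1) := by
      rw [abs_mul, abs_mul, abs_mul, abs_of_nonneg (hlam i), abs_of_nonneg (hs0' i j),
        hyabs i, abs_of_nonneg (by linarith : (0:ℝ) ≤ (d:ℝ) + 1)]
      ring
    have h3 := hRxb i j
    calc |lam i * y i * s i j * ((d:ℝ) + 1)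
          + ∑ l ∈ univ.erase i, lam l * y l * s l j * (⟪x l, x i⟫_ℝ + 1)| ≤ _ := h1
      _ ≤ lam i * s i j * ((d:ℝ) + 1) + (p + 1) * A j := by rw [h2]; linarith
  -- inner products with zs
  have huz := inner_zs_bound d m x y p hy hx hp0 hp
  have hu : ∀ l, U ≤ y l * ⟪x l, zs⟫_ℝ := by
    intro l
    have h1 := (abs_le.mp (huz l)).1
    have hmp' : (m:ℝ) * p + (m:ℝ) * 1 = (m:ℝ) * (p + 1) := by ring
    rw [hzs]
    rw [hUdef]
    have h2 : (m:ℝ) * p ≤ ((d:ℝ) + 1) / 3 - (m:ℝ) := by linarith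
    linarith
  have htz : ∀ j, ⟪w j, zs⟫_ℝ = v j * T j := by
    intro j
    rw [hw j, sum_inner]
    simp only [real_inner_smul_left]
    simp only [hT]
    rw [Finset.mul_sum]
    exact Finset.sum_congr rfl fun l _ => by ring
  have hTU : ∀ j, U * A j ≤ T j := by
    intro j
    have e : U * A j = ∑ l, lam l * s l j * U := by
      simp only [hA]
      rw [Finset.mul_sum]
      exact Finset.sum_congr rfl fun l _ => by ring
    rw [e]
    simp only [hT]
    exact Finset.sum_le_sum fun l _ =>
      mul_le_mul_of_nonneg_left (hu l) (mul_nonneg (hlam l) (hs0' l j))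
  -- relu via s
  have hrelu : ∀ i j, max 0 (⟪w j, x i⟫_ℝ + b j) = s i j * (⟪w j, x i⟫_ℝ + b j) :=
    fun i j => relu_eq_mul _ _ (hs1 i j) (hs0 i j)
  have hnetx : ∀ i, net w b v (x i) = ∑ j, v j * (s i j * (v j * Sx i j)) := by
    intro i
    simp only [net]
    exact Finset.sum_congr rfl fun j _ => by rw [hrelu i j, hpre i j]
  have hBnn : 0 ≤ B := by
    rw [hBdef]
    exact Finset.sum_nonneg fun j _ => mul_nonneg (sq_nonneg _) (hA0 j)
  have hBlow : 3 * (c * m) ≤ 4 * (((d:ℝ) + 1) * B) := by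
    have hone : ∀ i', y i' = -1 → 1 ≤ ∑ j ∈ univ.filter (fun j => v j < 0),
        v j ^ 2 * (lam i' * s i' j * ((d:ℝ)+1) + (p+1) * A j) := by
      intro i' hyi'
      have h1 : 1 ≤ - net w b v (x i') := by
        have := hmargin i'
        rw [hyi'] at this
        linarith
      have h2 : - net w b v (x i') = ∑ j, (-(v j)) * max 0 (⟪w j, x i'⟫_ℝ + b j) := by
        simp only [net, ← Finset.sum_neg_distrib]
        exact Finset.sum_congr rfl fun j _ => by ring
      have h3 : ∑ j, (-(v j)) * max 0 (⟪w j, x i'⟫_ℝ + b j)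
          ≤ ∑ j ∈ univ.filter (fun j => v j < 0), (-(v j)) * max 0 (⟪w j, x i'⟫_ℝ + b j) := by
        rw [← Finset.sum_filter_add_sum_filter_not univ (fun j => v j < 0)
          (fun j => (-(v j)) * max 0 (⟪w j, x i'⟫_ℝ + b j))]
        have hnp : ∑ j ∈ univ.filter (fun j => ¬ v j < 0),
            (-(v j)) * max 0 (⟪w j, x i'⟫_ℝ + b j) ≤ 0 := by
          apply Finset.sum_nonpos
          intro j hj
          have h0 : 0 ≤ v j := le_of_not_gt (Finset.mem_filter.mp hj).2
          have hmax0 : 0 ≤ max 0 (⟪w j, x i'⟫_ℝ + b j) := le_max_left _ _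
          nlinarith
        linarith
      have h4 : ∀ j ∈ univ.filter (fun j => v j < 0),
          (-(v j)) * max 0 (⟪w j, x i'⟫_ℝ + b j)
            ≤ v j ^ 2 * (lam i' * s i' j * ((d:ℝ)+1) + (p+1) * A j) := by
        intro j hj
        have hvj : v j < 0 := (Finset.mem_filter.mp hj).2
        have hmx : max 0 (⟪w j, x i'⟫_ℝ + b j) ≤ |v j| * |Sx i' j| := by
          rw [hpre i' j]
          calc max 0 (v j * Sx i' j) ≤ |v j * Sx i' j| :=
                max_le (abs_nonneg _) (le_abs_self _)
            _ = |v j| * |Sx i' j| := abs_mul _ _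
        have hva : -(v j) = |v j| := (abs_of_neg hvj).symm
        calc (-(v j)) * max 0 (⟪w j, x i'⟫_ℝ + b j)
            ≤ |v j| * (|v j| * |Sx i' j|) := by
              rw [hva]
              exact mul_le_mul_of_nonneg_left hmx (abs_nonneg _)
          _ = v j ^ 2 * |Sx i' j| := by rw [← mul_assoc, ← abs_mul, abs_mul_self, sq]
          _ ≤ v j ^ 2 * (lam i' * s i' j * ((d:ℝ)+1) + (p+1) * A j) :=
              mul_le_mul_of_nonneg_left (hSxabs i' j) (sq_nonneg _)
      calc (1:ℝ) ≤ - net w b v (x i') := h1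
        _ = _ := h2
        _ ≤ _ := h3
        _ ≤ _ := Finset.sum_le_sum h4
    have hcard : ((univ.filter (fun i => y i = -1)).card : ℝ)
        ≤ ((d:ℝ)+1) * B + ((univ.filter (fun i => y i = -1)).card : ℝ) * ((p+1) * B) := by
      have h5 : ((univ.filter (fun i => y i = -1)).card : ℝ)
          = ∑ _i' ∈ univ.filter (fun i => y i = -1), (1:ℝ) := by
        rw [Finset.sum_const, nsmul_eq_mul, mul_one]
      have h6 : ∑ _i' ∈ univ.filter (fun i => y i = -1), (1:ℝ)
          ≤ ∑ i' ∈ univ.filter (fun i => y i = -1), ∑ j ∈ univ.filter (fun j => v j < 0),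
              v j ^ 2 * (lam i' * s i' j * ((d:ℝ)+1) + (p+1) * A j) :=
        Finset.sum_le_sum fun i' hi' => hone i' (Finset.mem_filter.mp hi').2
      have h7 : ∑ i' ∈ univ.filter (fun i => y i = -1), ∑ j ∈ univ.filter (fun j => v j < 0),
            v j ^ 2 * (lam i' * s i' j * ((d:ℝ)+1) + (p+1) * A j)
          = ∑ j ∈ univ.filter (fun j => v j < 0),
              (((d:ℝ)+1) * v j ^ 2 * (∑ i' ∈ univ.filter (fun i => y i = -1), lam i' * s i' j)
                + ((univ.filter (fun i => y i = -1)).card : ℝ) * (v j ^ 2 * ((p+1) * A j))) := by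
        rw [Finset.sum_comm]
        refine Finset.sum_congr rfl fun j _ => ?_
        calc ∑ i' ∈ univ.filter (fun i => y i = -1),
              v j ^ 2 * (lam i' * s i' j * ((d:ℝ)+1) + (p+1) * A j)
            = ∑ i' ∈ univ.filter (fun i => y i = -1),
                (((d:ℝ)+1) * v j ^ 2 * (lam i' * s i' j) + v j ^ 2 * ((p+1) * A j)) :=
              Finset.sum_congr rfl fun i' _ => by ring
          _ = _ := by
              rw [Finset.sum_add_distrib, ← Finset.mul_sum, Finset.sum_const, nsmul_eq_mul]
      have h8 : ∑ j ∈ univ.filter (fun j => v j < 0),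
            (((d:ℝ)+1) * v j ^ 2 * (∑ i' ∈ univ.filter (fun i => y i = -1), lam i' * s i' j)
              + ((univ.filter (fun i => y i = -1)).card : ℝ) * (v j ^ 2 * ((p+1) * A j)))
          ≤ ((d:ℝ)+1) * B + ((univ.filter (fun i => y i = -1)).card : ℝ) * ((p+1) * B) := by
        have h9 : ∀ j, (∑ i' ∈ univ.filter (fun i => y i = -1), lam i' * s i' j) ≤ A j := by
          intro j
          simp only [hA]
          exact Finset.sum_le_sum_of_subset_of_nonneg (Finset.filter_subset _ _)
            (fun l _ _ => mul_nonneg (hlam l) (hs0' l j))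
        calc ∑ j ∈ univ.filter (fun j => v j < 0),
              (((d:ℝ)+1) * v j ^ 2 * (∑ i' ∈ univ.filter (fun i => y i = -1), lam i' * s i' j)
                + ((univ.filter (fun i => y i = -1)).card : ℝ) * (v j ^ 2 * ((p+1) * A j)))
            ≤ ∑ j ∈ univ.filter (fun j => v j < 0),
                (((d:ℝ)+1) * v j ^ 2 * A j
                  + ((univ.filter (fun i => y i = -1)).card : ℝ) * (v j ^ 2 * ((p+1) * A j))) := by
              apply Finset.sum_le_sum
              intro j _
              have := mul_le_mul_of_nonneg_left (h9 j)
                (mul_nonneg (by linarith : (0:ℝ) ≤ (d:ℝ)+1) (sq_nonneg (v j)))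
              linarith
          _ = ((d:ℝ)+1) * B + ((univ.filter (fun i => y i = -1)).card : ℝ) * ((p+1) * B) := by
              rw [Finset.sum_add_distrib, hBdef, Finset.mul_sum, Finset.mul_sum, Finset.mul_sum]
              congr 1
              · exact Finset.sum_congr rfl fun j _ => by ring
              · exact Finset.sum_congr rfl fun j _ => by ring
      rw [h7] at h6
      linarith [h5, h6, h8]
    have hcm2 : ((univ.filter (fun i => y i = -1)).card : ℝ) ≤ (m:ℝ) := by
      have := Finset.card_filter_le (univ : Finset (Fin m)) (fun i => y i = -1)
      rw [Finset.card_univ, Fintype.card_fin] at this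
      exact_mod_cast this
    have hPc : ((univ.filter (fun i => y i = -1)).card : ℝ) * (p+1) ≤ ((d:ℝ)+1)/3 :=
      le_trans (mul_le_mul_of_nonneg_right hcm2 (by linarith)) hmp
    have h10 : ((univ.filter (fun i => y i = -1)).card : ℝ) * ((p+1) * B) ≤ ((d:ℝ)+1)/3 * B := by
      nlinarith [hBnn]
    nlinarith [hIm, hcard, h10]
  have hC1 : p + 1 ≤ η * U := by
    have h1 : 3 * (p+1) / ((d:ℝ)+1) * U = 2 * (p+1) := by
      rw [hUdef]
      field_simp
    have h2 : (0:ℝ) ≤ 8 / (c*m) * U := by positivity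
    have h3 : η * U = 8/(c*m) * U + 3*(p+1)/((d:ℝ)+1) * U := by rw [hηdef]; ring
    rw [h3, h1]
    linarith
  have hC2 : 2 + (p + 1) * B ≤ η * U * B := by
    have hq0 : (0:ℝ) < 8 / (c*m) := by positivity
    have h24 : 24 ≤ 8/(c*m) * (4 * (((d:ℝ)+1) * B)) := by
      have e : (24:ℝ) = 8/(c*m) * (3*(c*m)) := by field_simp; ring
      rw [e]
      exact mul_le_mul_of_nonneg_left hBlow hq0.le
    have hr : 3*(p+1)/((d:ℝ)+1) * ((d:ℝ)+1) = 3*(p+1) := div_mul_cancel₀ _ hd0.ne'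
    have hexp : η * U * B = (2/3) * ((8/(c*m)) * (((d:ℝ)+1) * B))
        + (2/3) * ((3*(p+1)/((d:ℝ)+1) * ((d:ℝ)+1)) * B) := by
      rw [hηdef, hUdef]
      ring
    rw [hexp, hr]
    nlinarith [hBnn, hP1, mul_nonneg (by linarith : (0:ℝ) ≤ p+1) hBnn]
  -- main per-point argument
  intro i hyi
  have hppre : ∀ j, ⟪w j, x i - η • zs⟫_ℝ + b j = v j * Sx i j - η * (v j * T j) := by
    intro j
    rw [inner_sub_right, real_inner_smul_right, htz j]
    have := hpre i j
    linarith
  have hnetp : net w b v (x i - η • zs)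
      = ∑ j, v j * max 0 (v j * Sx i j - η * (v j * T j)) := by
    simp only [net]
    exact Finset.sum_congr rfl fun j _ => by rw [hppre j]
  -- per-neuron bounds
  have hneg : ∀ j, v j < 0 →
      v j * max 0 (v j * Sx i j - η * (v j * T j))
        ≤ v j * (s i j * (v j * Sx i j)) + (v j ^ 2 * ((p+1) * A j) - η * (v j ^ 2 * (U * A j))) := by
    intro j hvj
    have h1 : v j * max 0 (v j * Sx i j - η * (v j * T j))
        ≤ v j * (v j * Sx i j - η * (v j * T j)) := by
      have hmr := le_max_right 0 (v j * Sx i j - η * (v j * T j))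
      nlinarith
    have h3 : (η * v j ^ 2) * (U * A j) ≤ (η * v j ^ 2) * T j :=
      mul_le_mul_of_nonneg_left (hTU j) (by positivity)
    have h4 : v j ^ 2 * Sx i j - v j * (s i j * (v j * Sx i j)) ≤ v j ^ 2 * ((p+1) * A j) := by
      rcases lt_trichotomy (⟪w j, x i⟫_ℝ + b j) 0 with hc|hc|hc
      · have hsij := hs0 i j hc
        have hSxle : Sx i j ≤ (p+1) * A j := by
          rw [hSxd i j, hsij]
          have habs := abs_le.mp (hRxb i j)
          simp only [mul_zero, zero_mul]
          linarith [habs.2]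
        rw [hsij]
        have := mul_le_mul_of_nonneg_left hSxle (sq_nonneg (v j))
        nlinarith
      · have h0 : v j * Sx i j = 0 := by rw [← hpre i j]; exact hc
        have hSx0 : Sx i j = 0 := by
          rcases mul_eq_zero.mp h0 with h|h
          · exact absurd h (ne_of_lt hvj)
          · exact h
        rw [hSx0]
        have hnn : (0:ℝ) ≤ v j ^ 2 * ((p+1) * A j) :=
          mul_nonneg (sq_nonneg _) (mul_nonneg (by linarith) (hA0 j))
        nlinarith
      · have hsij := hs1 i j hc
        rw [hsij]
        have hnn : (0:ℝ) ≤ v j ^ 2 * ((p+1) * A j) :=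
          mul_nonneg (sq_nonneg _) (mul_nonneg (by linarith) (hA0 j))
        nlinarith
    nlinarith [h1, h3, h4]
  have hposv : ∀ j, 0 ≤ v j →
      v j * max 0 (v j * Sx i j - η * (v j * T j)) ≤ v j * (s i j * (v j * Sx i j)) := by
    intro j hvj
    have hTj0 : 0 ≤ v j * T j :=
      mul_nonneg hvj (le_trans (mul_nonneg hU0.le (hA0 j)) (hTU j))
    have hmx : max 0 (v j * Sx i j - η * (v j * T j)) ≤ max 0 (v j * Sx i j) := by
      apply max_le_max le_rfl
      nlinarith [hη0.le]
    have heq : max 0 (v j * Sx i j) = s i j * (v j * Sx i j) := by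
      rw [← hpre i j]
      exact hrelu i j
    calc v j * max 0 (v j * Sx i j - η * (v j * T j))
        ≤ v j * max 0 (v j * Sx i j) := mul_le_mul_of_nonneg_left hmx hvj
      _ = v j * (s i j * (v j * Sx i j)) := by rw [heq]
  have hpos0 : lam i = 0 → ∀ j, 0 ≤ v j →
      v j * max 0 (v j * Sx i j - η * (v j * T j)) ≤ 0 := by
    intro hlami j hvj
    have hSxle : Sx i j ≤ (p+1) * A j := by
      rw [hSxd i j, hlami]
      have habs := abs_le.mp (hRxb i j)
      simp only [zero_mul]
      linarith [habs.2]
    have hX0 : v j * Sx i j - η * (v j * T j) ≤ 0 := by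
      have h1 : v j * Sx i j ≤ v j * ((p+1) * A j) := mul_le_mul_of_nonneg_left hSxle hvj
      have h2 : η * (v j * (U * A j)) ≤ η * (v j * T j) :=
        mul_le_mul_of_nonneg_left (mul_le_mul_of_nonneg_left (hTU j) hvj) hη0.le
      have hvA : 0 ≤ v j * A j := mul_nonneg hvj (hA0 j)
      have h3 : v j * ((p+1) * A j) ≤ η * (v j * (U * A j)) := by
        nlinarith [mul_le_mul_of_nonneg_left hC1 hvA]
      linarith
    rw [max_eq_left hX0, mul_zero]
  have hnegsum : ∑ j ∈ univ.filter (fun j => v j < 0),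
      (v j ^ 2 * ((p+1) * A j) - η * (v j ^ 2 * (U * A j))) = (p+1) * B - η * (U * B) := by
    have e1 : (p+1) * B = ∑ j ∈ univ.filter (fun j => v j < 0), v j ^ 2 * ((p+1) * A j) := by
      rw [hBdef, Finset.mul_sum]
      exact Finset.sum_congr rfl fun j _ => by ring
    have e2 : η * (U * B) = ∑ j ∈ univ.filter (fun j => v j < 0), η * (v j ^ 2 * (U * A j)) := by
      rw [hBdef, Finset.mul_sum, Finset.mul_sum]
      exact Finset.sum_congr rfl fun j _ => by ring
    rw [Finset.sum_sub_distrib, ← e1, ← e2]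
  by_cases hlami : lam i = 0
  · -- non-support point
    have hb1 : net w b v (x i - η • zs)
        ≤ ∑ j, (if v j < 0 then v j ^ 2 * ((p+1) * A j) - η * (v j ^ 2 * (U * A j)) else 0) := by
      rw [hnetp]
      apply Finset.sum_le_sum
      intro j _
      by_cases hvj : v j < 0
      · rw [if_pos hvj]
        have h1 := hneg j hvj
        have h2 : v j * (s i j * (v j * Sx i j)) ≤ 0 := by
          have : 0 ≤ s i j * (v j * Sx i j) := by
            rw [← hpre i j, ← hrelu i j]; exact le_max_left _ _
          exact mul_nonpos_of_nonpos_of_nonneg hvj.le this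
        linarith
      · rw [if_neg hvj]
        exact hpos0 hlami j (not_lt.mp hvj)
    rw [← Finset.sum_filter] at hb1
    rw [hnegsum] at hb1
    nlinarith
  · -- support point: margin is exactly 1
    have hnet1 : net w b v (x i) = 1 := by
      by_contra hne
      exact hlami (hcomp i (by rw [hyi, one_mul]; exact hne))
    have hb1 : net w b v (x i - η • zs)
        ≤ ∑ j, (v j * (s i j * (v j * Sx i j))
            + (if v j < 0 then v j ^ 2 * ((p+1) * A j) - η * (v j ^ 2 * (U * A j)) else 0)) := by
      rw [hnetp]
      apply Finset.sum_le_sum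
      intro j _
      by_cases hvj : v j < 0
      · rw [if_pos hvj]; exact hneg j hvj
      · rw [if_neg hvj, add_zero]; exact hposv j (not_lt.mp hvj)
    rw [Finset.sum_add_distrib, ← Finset.sum_filter, hnegsum, ← hnetx i, hnet1] at hb1
    nlinarith


set_option maxHeartbeats 1000000 in
/-- under the KKT conditions of the max-margin problem, if
`m(p+1) ≤ (d+1)/3` and both labels make up at least a `c`-fraction of the data,
then there is a single small perturbation `z = η ∑ᵢ yᵢ xᵢ` with
`‖z‖ ≤ 18√(2d)/(c√m)` flipping the margin of every positively labeled point
(when subtracted) and of every negatively labeled point (when added). -/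
theorem kkt_networks_nonrobust (d m k : ℕ)
    (x : Fin m → EuclideanSpace ℝ (Fin d)) (y : Fin m → ℝ)
    (w : Fin k → EuclideanSpace ℝ (Fin d)) (b v : Fin k → ℝ)
    (lam : Fin m → ℝ) (s : Fin m → Fin k → ℝ) (p : ℝ)
    (hy : ∀ i, y i = 1 ∨ y i = -1)
    (hx : ∀ i, ‖x i‖ = Real.sqrt d)
    (hp0 : 0 ≤ p)
    (hp : ∀ i j, i ≠ j → |⟪x i, x j⟫_ℝ| ≤ p)
    (hlam : ∀ i, 0 ≤ lam i)
    (hs01 : ∀ i j, s i j ∈ Set.Icc (0 : ℝ) 1)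
    (hmargin : ∀ i, 1 ≤ y i * net w b v (x i))
    (hcomp : ∀ i, y i * net w b v (x i) ≠ 1 → lam i = 0)
    (hs1 : ∀ i j, 0 < ⟪w j, x i⟫_ℝ + b j → s i j = 1)
    (hs0 : ∀ i j, ⟪w j, x i⟫_ℝ + b j < 0 → s i j = 0)
    (hw : ∀ j, w j = ∑ i, (lam i * y i * v j * s i j) • x i)
    (hb : ∀ j, b j = ∑ i, lam i * y i * v j * s i j)
    (hmp : (m : ℝ) * (p + 1) ≤ ((d : ℝ) + 1) / 3)
    (c : ℝ) (hc0 : 0 < c) (hc1 : c ≤ 1)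
    (hIp : c * m ≤ ((Finset.univ.filter fun i => y i = 1).card : ℝ))
    (hIm : c * m ≤ ((Finset.univ.filter fun i => y i = -1).card : ℝ)) :
    ∃ η : ℝ, 0 < η ∧
      ‖η • ∑ i, y i • x i‖ ≤ 18 * Real.sqrt (2 * d) / (c * Real.sqrt m) ∧
      (∀ i, y i = 1 → net w b v (x i - η • ∑ l, y l • x l) ≤ -1) ∧
      (∀ i, y i = -1 → 1 ≤ net w b v (x i + η • ∑ l, y l • x l)) := by
  classical
  rcases Nat.eq_zero_or_pos m with hm0 | hm
  · subst hm0
    refine ⟨1, one_pos, ?_, fun i => i.elim0, fun i => i.elim0⟩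
    simp only [Finset.univ_eq_empty, Finset.sum_empty, smul_zero, norm_zero]
    rw [Nat.cast_zero, Real.sqrt_zero, mul_zero, div_zero]
  · have hm1 : (1:ℝ) ≤ (m:ℝ) := by exact_mod_cast hm
    have hcm : (0:ℝ) < c * m := mul_pos hc0 (by linarith)
    have hP1 : (1:ℝ) ≤ p + 1 := by linarith
    have hd3 : (3:ℝ) ≤ (d:ℝ) + 1 := by nlinarith
    have hd0 : (0:ℝ) < (d:ℝ) + 1 := by linarith
    have huz := inner_zs_bound d m x y p hy hx hp0 hp
    refine ⟨8 / (c * m) + 3 * (p + 1) / ((d:ℝ) + 1), by positivity, ?_, ?_, ?_⟩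
    · -- norm bound
      have hη9 : 8 / (c * m) + 3 * (p + 1) / ((d:ℝ) + 1) ≤ 9 / (c * m) := by
        have h1 : 3 * (p + 1) / ((d:ℝ) + 1) ≤ 1 / (c * m) := by
          rw [div_le_div_iff₀ hd0 hcm]
          nlinarith [hmp, mul_nonneg (mul_nonneg (by linarith : (0:ℝ) ≤ p + 1)
            (by linarith : (0:ℝ) ≤ (m:ℝ))) (by linarith : (0:ℝ) ≤ 1 - c)]
        have h2 : (8:ℝ) / (c * m) + 1 / (c * m) = 9 / (c * m) := by
          rw [← add_div]
          norm_num
        linarith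
      have h4 : ⟪(∑ l, y l • x l : EuclideanSpace ℝ (Fin d)), ∑ l, y l • x l⟫_ℝ
          ≤ (m:ℝ) * (2 * (d:ℝ)) := by
        have h2 : ⟪(∑ l, y l • x l : EuclideanSpace ℝ (Fin d)), ∑ l, y l • x l⟫_ℝ
            = ∑ l, y l * ⟪x l, ∑ r, y r • x r⟫_ℝ := by
          rw [sum_inner]
          exact Finset.sum_congr rfl fun l _ => real_inner_smul_left _ _ _
        rw [h2]
        calc ∑ l, y l * ⟪x l, ∑ r, y r • x r⟫_ℝ
            ≤ ∑ _l : Fin m, ((d:ℝ) + m * p) :=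
              Finset.sum_le_sum fun l _ => by linarith [(abs_le.mp (huz l)).2]
          _ = (m:ℝ) * ((d:ℝ) + m * p) := by
              rw [Finset.sum_const, Finset.card_univ, Fintype.card_fin, nsmul_eq_mul]
          _ ≤ (m:ℝ) * (2 * (d:ℝ)) := by
              have he : (m:ℝ) * p + (m:ℝ) * 1 = (m:ℝ) * (p + 1) := by ring
              have hmp2 : (m:ℝ) * p ≤ ((d:ℝ) + 1) / 3 - 1 := by linarith
              apply mul_le_mul_of_nonneg_left (by linarith) (by linarith)
      have hnorm : ‖(∑ l, y l • x l : EuclideanSpace ℝ (Fin d))‖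
          ≤ Real.sqrt m * Real.sqrt (2 * (d:ℝ)) := by
        rw [← Real.sqrt_mul (by positivity) ]
        calc ‖(∑ l, y l • x l : EuclideanSpace ℝ (Fin d))‖
            = Real.sqrt (‖(∑ l, y l • x l : EuclideanSpace ℝ (Fin d))‖ ^ 2) :=
              (Real.sqrt_sq (norm_nonneg _)).symm
          _ ≤ Real.sqrt ((m:ℝ) * (2 * (d:ℝ))) := by
              apply Real.sqrt_le_sqrt
              rw [← real_inner_self_eq_norm_sq]
              exact h4
      rw [norm_smul, Real.norm_eq_abs, abs_of_pos (by positivity)]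
      have hsm : Real.sqrt m * Real.sqrt m = (m:ℝ) := Real.mul_self_sqrt (by positivity)
      have hsm0 : 0 < Real.sqrt m := Real.sqrt_pos.mpr (by linarith)
      have hstep : (8 / (c * m) + 3 * (p + 1) / ((d:ℝ) + 1))
            * ‖(∑ l, y l • x l : EuclideanSpace ℝ (Fin d))‖
          ≤ (9 / (c * m)) * (Real.sqrt m * Real.sqrt (2 * (d:ℝ))) :=
        mul_le_mul hη9 hnorm (norm_nonneg _) (by positivity)
      have hkey : (9 / (c * m)) * (Real.sqrt m * Real.sqrt (2 * (d:ℝ)))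
          = 9 * Real.sqrt (2 * (d:ℝ)) / (c * Real.sqrt m) := by
        rw [div_mul_eq_mul_div, div_eq_div_iff (by positivity) (by positivity)]
        linear_combination (9 * Real.sqrt (2 * (d:ℝ)) * c) * hsm
      have hlast : 9 * Real.sqrt (2 * (d:ℝ)) / (c * Real.sqrt m)
          ≤ 18 * Real.sqrt (2 * (d:ℝ)) / (c * Real.sqrt m) := by
        apply div_le_div_of_nonneg_right ?_ (by positivity)
        · nlinarith [Real.sqrt_nonneg (2 * (d:ℝ))]
      calc (8 / (c * m) + 3 * (p + 1) / ((d:ℝ) + 1))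
            * ‖(∑ l, y l • x l : EuclideanSpace ℝ (Fin d))‖
          ≤ (9 / (c * m)) * (Real.sqrt m * Real.sqrt (2 * (d:ℝ))) := hstep
        _ = 9 * Real.sqrt (2 * (d:ℝ)) / (c * Real.sqrt m) := hkey
        _ ≤ 18 * Real.sqrt (2 * (d:ℝ)) / (c * Real.sqrt m) := hlast
    · -- positive points
      exact kkt_main_pos d m k x y w b v lam s p hy hx hp0 hp hlam hs01 hmargin hcomp
        hs1 hs0 hw hb hmp c hc0 hc1 hm hIm
    · -- negative points, via the symmetry (y, v) ↦ (-y, -v)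
      have hnetneg : ∀ ξ, net w b (fun j => -v j) ξ = - net w b v ξ := by
        intro ξ
        simp only [net, neg_mul]
        exact Finset.sum_neg_distrib _
      have hy' : ∀ i, -y i = 1 ∨ -y i = -1 := by
        intro i
        rcases hy i with h|h
        · right; rw [h]
        · left; rw [h]; norm_num
      have hmargin' : ∀ i, 1 ≤ -y i * net w b (fun j => -v j) (x i) := by
        intro i
        rw [hnetneg (x i), neg_mul_neg]
        exact hmargin i
      have hcomp' : ∀ i, -y i * net w b (fun j => -v j) (x i) ≠ 1 → lam i = 0 := by
        intro i hne
        apply hcomp i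
        intro he
        apply hne
        rw [hnetneg (x i), neg_mul_neg]
        exact he
      have hw' : ∀ j, w j = ∑ i, (lam i * -y i * -v j * s i j) • x i := by
        intro j
        rw [hw j]
        refine Finset.sum_congr rfl fun l _ => ?_
        congr 1
        ring
      have hb' : ∀ j, b j = ∑ i, lam i * -y i * -v j * s i j := by
        intro j
        rw [hb j]
        exact Finset.sum_congr rfl fun l _ => by ring
      have hfilter : (univ.filter fun i => -y i = -1) = (univ.filter fun i => y i = 1) := by
        apply Finset.filter_congr
        intro i _
        constructor
        · intro h; linarith
        · intro h; rw [h]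
      have hnegside := kkt_main_pos d m k x (fun i => -y i) w b (fun j => -v j) lam s p
        hy' hx hp0 hp hlam hs01 hmargin' hcomp' hs1 hs0 hw' hb' hmp c hc0 hc1 hm
        (by rw [hfilter]; exact hIp)
      intro i hyi
      have h := hnegside i (by show -y i = 1; rw [hyi]; norm_num)
      have hzz : (∑ l, -y l • x l : EuclideanSpace ℝ (Fin d)) = -(∑ l, y l • x l) := by
        rw [← Finset.sum_neg_distrib]
        exact Finset.sum_congr rfl fun l _ => (neg_smul _ _)
      rw [hzz, smul_neg, sub_neg_eq_add, hnetneg] at h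
      linarith
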